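/- Let $K$ be a field of characteristic different from $2$, let $r, s, t, Q \in K$ with $s \neq 1$, $Q \neq 0$ and $Q^2 = st$. Set $P = (1-s)/4$, $A = (r + 6st - 2t)/(4PQ)$, $B = (APQ - Q^2 + 4P^2 + 1)/P^2$, $C = 4(AP - Q)/P$, and set $c_2 = r + 4t$, $c_1 = 4t(r + s^3 - s^2t - 2s^2 + 5s + t)$, $c_0 = 4t(s-1)(rs^2 - rst - rs - rt - 8st)$. Then for every $\alpha \in K$, putting $\beta = (s-1)(Q\alpha - 2t)$, one has $\beta^3 - c_2\beta^2 + c_1\beta - c_0 = (s-1)^3Q^3(\alpha^3 + A\alpha^2 + B\alpha + C)$. In particular $\beta$ is a root of $T^3 - c_2T^2 + c_1T - c_0$ if and only if $\alpha$ is a root of $T^3 + AT^2 + BT + C$. -/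

import Mathlib

set_option maxHeartbeats 2000000


/-- The identity relating the roots of the cubic of Bending's construction to the roots
of the cubic `h` of the paper's variant construction (Theorem 4.2), via
`β = (s-1)(Qα - 2t)`. -/
theorem stmt_3 {K : Type*} [Field K] (hchar : (2 : K) ≠ 0) (r s t Q : K)
    (hs : s ≠ 1) (hQ : Q ≠ 0) (hQ2 : Q ^ 2 = s * t) :
    let P : K := (1 - s) / 4
    let A : K := (r + 6 * s * t - 2 * t) / (4 * P * Q)
    let B : K := (A * P * Q - Q ^ 2 + 4 * P ^ 2 + 1) / P ^ 2
    let C : K := 4 * (A * P - Q) / P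
    let c2 : K := r + 4 * t
    let c1 : K := 4 * t * (r + s ^ 3 - s ^ 2 * t - 2 * s ^ 2 + 5 * s + t)
    let c0 : K := 4 * t * (s - 1) * (r * s ^ 2 - r * s * t - r * s - r * t - 8 * s * t)
    ∀ α : K,
      let β : K := (s - 1) * (Q * α - 2 * t)
      β ^ 3 - c2 * β ^ 2 + c1 * β - c0 =
          (s - 1) ^ 3 * Q ^ 3 * (α ^ 3 + A * α ^ 2 + B * α + C) ∧
        (β ^ 3 - c2 * β ^ 2 + c1 * β - c0 = 0 ↔
          α ^ 3 + A * α ^ 2 + B * α + C = 0) := by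
  intro P A B C c2 c1 c0 α β
  have h4 : (4 : K) ≠ 0 := by
    have : (4 : K) = 2 * 2 := by norm_num
    rw [this]; exact mul_ne_zero hchar hchar
  have hs1 : s - 1 ≠ 0 := sub_ne_zero.mpr hs
  have hP : P ≠ 0 := by
    simp only [P]
    exact div_ne_zero (by rw [← neg_sub]; exact neg_ne_zero.mpr hs1) h4
  have h16 : (16 : K) ≠ 0 := by
    have : (16 : K) = 4 * 4 := by norm_num
    rw [this]; exact mul_ne_zero h4 h4
  have hs1' : (1 : K) - s ≠ 0 := sub_ne_zero.mpr (Ne.symm hs)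
  have hs0 : s ≠ 0 := by
    intro h; apply hQ
    rw [h, zero_mul] at hQ2
    exact pow_eq_zero_iff (by norm_num) |>.mp hQ2
  have hA : A = (r + 6 * s * t - 2 * t) / ((1 - s) * Q) := by
    show (r + 6 * s * t - 2 * t) / (4 * P * Q) = _
    congr 1
    simp only [P]
    field_simp
  have hAPQ : A * P * Q = (r + 6 * s * t - 2 * t) / 4 := by
    rw [hA]; simp only [P]
    field_simp
  have hB : B = (4 * (r + 6 * s * t - 2 * t) - 16 * Q ^ 2 + 4 * (1 - s) ^ 2 + 16) /
      (1 - s) ^ 2 := by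
    show (A * P * Q - Q ^ 2 + 4 * P ^ 2 + 1) / P ^ 2 = _
    rw [hAPQ]
    simp only [P]
    field_simp
    ring
  have hC : C = (4 * (r + 6 * s * t - 2 * t) - 16 * Q ^ 2) / ((1 - s) * Q) := by
    show 4 * (A * P - Q) / P = _
    rw [hA]
    simp only [P]
    field_simp
    ring
  have hTA : (s - 1) ^ 3 * Q ^ 3 * A = -((s - 1) ^ 2 * Q ^ 2 * (r + 6 * s * t - 2 * t)) := by
    rw [hA]; field_simp; ring
  have hTB : (s - 1) ^ 3 * Q ^ 3 * B =
      (s - 1) * Q ^ 3 * (4 * (r + 6 * s * t - 2 * t) - 16 * Q ^ 2 + 4 * (1 - s) ^ 2 + 16) := by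
    rw [hB]; field_simp; ring
  have hTC : (s - 1) ^ 3 * Q ^ 3 * C =
      -((s - 1) ^ 2 * Q ^ 2 * (4 * (r + 6 * s * t - 2 * t) - 16 * Q ^ 2)) := by
    rw [hC]; field_simp; ring
  have key : β ^ 3 - c2 * β ^ 2 + c1 * β - c0 =
      (s - 1) ^ 3 * Q ^ 3 * (α ^ 3 + A * α ^ 2 + B * α + C) := by
    have expand : (s - 1) ^ 3 * Q ^ 3 * (α ^ 3 + A * α ^ 2 + B * α + C) =
        (s - 1) ^ 3 * Q ^ 3 * α ^ 3 + ((s - 1) ^ 3 * Q ^ 3 * A) * α ^ 2 +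
        ((s - 1) ^ 3 * Q ^ 3 * B) * α + (s - 1) ^ 3 * Q ^ 3 * C := by ring
    rw [expand, hTA, hTB, hTC]
    simp only [β, c2, c1, c0]
    linear_combination (20 * Q * α + (-16) * Q^2 + (-16) * Q^3 * α + (-8) * t + (-8) * t * Q * α + (-28) * s * Q * α + 32 * s * Q^2 + 16 * s * Q^3 * α + 24 * s * t + 16 * s * t * Q * α + 12 * s^2 * Q * α + (-16) * s^2 * Q^2 + (-24) * s^2 * t + (-8) * s^2 * t * Q * α + (-4) * s^3 * Q * α + 8 * s^3 * t + 4 * r + 4 * r * Q * α + (-8) * r * s + (-4) * r * s * Q * α + 4 * r * s^2) * hQ2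
  refine ⟨key, ?_⟩
  rw [key]
  constructor
  · intro h
    have := mul_eq_zero.mp h
    rcases this with h' | h'
    · exact absurd h' (mul_ne_zero (pow_ne_zero 3 hs1) (pow_ne_zero 3 hQ))
    · exact h'
  · intro h; rw [h, mul_zero]
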